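/- Let a_n := 4^{−n}·√(π·(n+1/2))·C(2n, n) for integers n ≥ 0, where C(2n, n) is the central binomial coefficient. Then the sequence (a_n) is nonincreasing, it tends to 1 as n → ∞, and consequently a_n ≥ 1 for every n ≥ 0, i.e. 4^n ≤ √(π·(n+1/2))·C(2n, n). -/

import Mathlib

open Real Filter

noncomputable section

/-- The sequence `a n = 4^{-n} √(π(n+1/2)) C(2n,n)`. -/
def centralBinomSeq (n : ℕ) : ℝ :=
  ((4 : ℝ) ^ n)⁻¹ * Real.sqrt (π * ((n : ℝ) + 1/2)) * (Nat.choose (2 * n) n : ℝ)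

lemma centralBinomSeq_nonneg (n : ℕ) : 0 ≤ centralBinomSeq n := by
  unfold centralBinomSeq; positivity

lemma centralBinomSeq_sq (n : ℕ) :
    centralBinomSeq n ^ 2 = (π / 2) / Real.Wallis.W n := by
  have hC : ((Nat.choose (2 * n) n : ℝ)) * (Nat.factorial n : ℝ) * (Nat.factorial n : ℝ) = (Nat.factorial (2*n) : ℝ) := by
    have h := Nat.choose_mul_factorial_mul_factorial (by omega : n ≤ 2 * n)
    rw [show 2 * n - n = n by omega] at h
    exact_mod_cast congrArg (Nat.cast : ℕ → ℝ) h
  have hπ : (0 : ℝ) ≤ π * ((n : ℝ) + 1/2) := by positivity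
  have h4 : ((4 : ℝ) ^ n) ^ 2 = 2 ^ (4 * n) := by
    rw [show (4:ℝ) = 2 ^ 2 by norm_num, ← pow_mul, ← pow_mul]; ring_nf
  rw [centralBinomSeq, mul_pow, mul_pow, sq_sqrt hπ, Real.Wallis.W_eq_factorial_ratio,
    inv_pow, h4]
  have hf : (0:ℝ) < (Nat.factorial n : ℝ) := by positivity
  have h2 : (0:ℝ) < (2:ℝ) ^ (4 * n) := by positivity
  have h2n1 : (0:ℝ) < 2 * (n:ℝ) + 1 := by positivity
  field_simp
  linear_combination (
    ((Nat.choose (2*n) n : ℝ) * (Nat.factorial n : ℝ) * (Nat.factorial n : ℝ) +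
      (Nat.factorial (2*n) : ℝ))) * hC

theorem stmt_19 :
    Antitone centralBinomSeq ∧
    Tendsto centralBinomSeq atTop (nhds 1) ∧
    (∀ n : ℕ, 1 ≤ centralBinomSeq n) ∧
    (∀ n : ℕ, (4 : ℝ) ^ n ≤ Real.sqrt (π * ((n : ℝ) + 1/2)) * (Nat.choose (2 * n) n : ℝ)) := by
  have hsqrt : ∀ n, centralBinomSeq n = Real.sqrt ((π / 2) / Real.Wallis.W n) := by
    intro n
    rw [← centralBinomSeq_sq, Real.sqrt_sq (centralBinomSeq_nonneg n)]
  have hWmono : Monotone Real.Wallis.W := by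
    apply monotone_nat_of_le_succ
    intro n
    rw [Real.Wallis.W_succ]
    have h1 : (0:ℝ) < 2 * (n:ℝ) + 1 := by positivity
    have h3 : (0:ℝ) < 2 * (n:ℝ) + 3 := by positivity
    have hW := Real.Wallis.W_pos n
    have hfac : (1:ℝ) ≤ (2 * n + 2) / (2 * n + 1) * ((2 * n + 2) / (2 * n + 3)) := by
      rw [div_mul_div_comm, le_div_iff₀ (by positivity)]
      nlinarith
    nlinarith
  have hanti : Antitone centralBinomSeq := by
    intro m n h
    rw [hsqrt, hsqrt]
    apply Real.sqrt_le_sqrt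
    apply div_le_div_of_nonneg_left (le_of_lt pi_div_two_pos) (Real.Wallis.W_pos m)
      (hWmono h)
  have hone : ∀ n, 1 ≤ centralBinomSeq n := by
    intro n
    rw [hsqrt]
    rw [Real.one_le_sqrt, le_div_iff₀ (Real.Wallis.W_pos n), one_mul]
    exact Real.Wallis.W_le n
  refine ⟨hanti, ?_, hone, ?_⟩
  · have : Tendsto (fun n => Real.sqrt ((π / 2) / Real.Wallis.W n)) atTop (nhds 1) := by
      have h1 : Tendsto (fun n => (π / 2) / Real.Wallis.W n) atTop (nhds 1) := by
        have h := (tendsto_const_nhds (x := π / 2) (f := atTop (α := ℕ))).div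
          Real.Wallis.tendsto_W_nhds_pi_div_two (ne_of_gt pi_div_two_pos)
        rw [div_self (ne_of_gt pi_div_two_pos)] at h
        exact h
      have := h1.sqrt
      simpa using this
    exact Tendsto.congr (fun n => (hsqrt n).symm) this
  · intro n
    have h := hone n
    rw [centralBinomSeq] at h
    have h4 : (0:ℝ) < (4:ℝ) ^ n := by positivity
    calc (4:ℝ) ^ n = (4:ℝ) ^ n * 1 := by ring
      _ ≤ (4:ℝ) ^ n * (((4 : ℝ) ^ n)⁻¹ * Real.sqrt (π * ((n : ℝ) + 1/2)) *
          (Nat.choose (2 * n) n : ℝ)) := by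
          exact mul_le_mul_of_nonneg_left h (le_of_lt h4)
      _ = ((4:ℝ) ^ n * ((4:ℝ) ^ n)⁻¹) * (Real.sqrt (π * ((n : ℝ) + 1/2)) *
          (Nat.choose (2 * n) n : ℝ)) := by ring
      _ = Real.sqrt (π * ((n : ℝ) + 1/2)) * (Nat.choose (2 * n) n : ℝ) := by
          rw [mul_inv_cancel₀ (ne_of_gt h4), one_mul]

end
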